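/- Suppose data points x₁,…,x_v ∈ ℝ^d can be shattered by linear classifiers w with ½ wᵀ P⁻¹ w ≤ E at margin 1 (for every sign pattern (y₁,…,y_v) there is such a w with yⱼ⟨w, xⱼ⟩ ≥ 1 for all j). Then v ≤ √(2E) · √(Σⱼ xⱼᵀ P xⱼ). -/

import Mathlib

open Matrix

private def sgn17 (b : Bool) : ℝ := if b then 1 else -1

private lemma sgn17_sq (b : Bool) : sgn17 b * sgn17 b = 1 := by
  cases b <;> simp [sgn17]

private lemma sgn17_cases (b : Bool) : sgn17 b = 1 ∨ sgn17 b = -1 := by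
  cases b <;> simp [sgn17]

private lemma sgn17_not (b : Bool) : sgn17 (!b) = - sgn17 b := by
  cases b <;> simp [sgn17]

private lemma dot_sum {n : Type*} [Fintype n] {ι : Type*} (s : Finset ι)
    (w : n → ℝ) (f : ι → n → ℝ) :
    w ⬝ᵥ (∑ j ∈ s, f j) = ∑ j ∈ s, w ⬝ᵥ f j := by
  simp only [dotProduct, Finset.sum_apply, Finset.mul_sum]
  exact Finset.sum_comm

private lemma mulVec_sum' {n : Type*} [Fintype n] [DecidableEq n] {ι : Type*} (s : Finset ι)
    (M : Matrix n n ℝ) (f : ι → n → ℝ) :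
    M *ᵥ (∑ j ∈ s, f j) = ∑ j ∈ s, M *ᵥ f j := by
  funext i
  simp only [mulVec, Finset.sum_apply]
  exact dot_sum s (M i) f

private lemma sum_dot {n : Type*} [Fintype n] {ι : Type*} (s : Finset ι)
    (f : ι → n → ℝ) (w : n → ℝ) :
    (∑ j ∈ s, f j) ⬝ᵥ w = ∑ j ∈ s, f j ⬝ᵥ w := by
  simp only [dotProduct, Finset.sum_apply, Finset.sum_mul]
  exact Finset.sum_comm

private lemma sum_sgn17_mul (v : ℕ) (j k : Fin v) (hjk : j ≠ k) :
    ∑ s : Fin v → Bool, sgn17 (s j) * sgn17 (s k) = 0 := by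
  have hinv : Function.Involutive (fun s : Fin v → Bool => Function.update s j (!(s j))) := by
    intro s
    funext i
    by_cases h : i = j
    · subst h; simp
    · simp [Function.update_of_ne h]
  have hbij := hinv.bijective
  have h1 : ∑ s : Fin v → Bool, sgn17 ((Function.update s j (!(s j))) j)
        * sgn17 ((Function.update s j (!(s j))) k)
      = ∑ s : Fin v → Bool, sgn17 (s j) * sgn17 (s k) :=
    Fintype.sum_bijective _ hbij _ _ (fun s => rfl)
  have h2 : ∀ s : Fin v → Bool, sgn17 ((Function.update s j (!(s j))) j)
        * sgn17 ((Function.update s j (!(s j))) k) = - (sgn17 (s j) * sgn17 (s k)) := by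
    intro s
    rw [Function.update_self, Function.update_of_ne (Ne.symm hjk), sgn17_not]
    ring
  rw [Finset.sum_congr rfl (fun s _ => h2 s)] at h1
  rw [Finset.sum_neg_distrib] at h1
  linarith

theorem stmt_17 (v d : ℕ) (x : Fin v → Fin d → ℝ)
    (P : Matrix (Fin d) (Fin d) ℝ) (hP : P.PosDef) (E : ℝ) (hE : 0 < E)
    (hshatter : ∀ y : Fin v → ℝ, (∀ j, y j = 1 ∨ y j = -1) →
      ∃ w : Fin d → ℝ, (1 / 2) * (w ⬝ᵥ (P⁻¹ *ᵥ w)) ≤ E ∧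
        ∀ j, 1 ≤ y j * (w ⬝ᵥ x j)) :
    (v : ℝ) ≤ Real.sqrt (2 * E) * Real.sqrt (∑ j, x j ⬝ᵥ (P *ᵥ x j)) := by
  have hPsymm : Pᵀ = P := by
    rw [← conjTranspose_eq_transpose_of_trivial]; exact hP.isHermitian
  have hPinvsymm : P⁻¹ᵀ = P⁻¹ := by
    rw [transpose_nonsing_inv, hPsymm]
  have hdet : IsUnit P.det := hP.det_pos.ne'.isUnit
  -- square root of P
  open scoped MatrixOrder in
  set S : Matrix (Fin d) (Fin d) ℝ := CFC.sqrt P with hSdef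
  have hSS : S * S = P := by
    open scoped MatrixOrder in
    exact CFC.sqrt_mul_sqrt_self P (nonneg_iff_posSemidef.mpr hP.posSemidef)
  have hSsymm : Sᵀ = S := by
    rw [← conjTranspose_eq_transpose_of_trivial]
    open scoped MatrixOrder in
    exact (nonneg_iff_posSemidef.mp (CFC.sqrt_nonneg P)).isHermitian
  have hSdot : ∀ u z : Fin d → ℝ, u ⬝ᵥ (P *ᵥ z) = (S *ᵥ u) ⬝ᵥ (S *ᵥ z) := by
    intro u z
    rw [dotProduct_mulVec (S *ᵥ u), vecMul_mulVec, hSsymm, hSS, ← dotProduct_mulVec]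
  -- Cauchy-Schwarz for dot products
  have cs : ∀ a b : Fin d → ℝ, (a ⬝ᵥ b) ^ 2 ≤ (a ⬝ᵥ a) * (b ⬝ᵥ b) := by
    intro a b
    have := Finset.sum_mul_sq_le_sq_mul_sq Finset.univ a b
    simpa [dotProduct, sq] using this
  have dot_nonneg : ∀ a : Fin d → ℝ, 0 ≤ a ⬝ᵥ a := by
    intro a
    exact Finset.sum_nonneg fun i _ => mul_self_nonneg _
  -- quadratic form nonnegativity
  have hq_nonneg : ∀ z : Fin d → ℝ, 0 ≤ z ⬝ᵥ (P *ᵥ z) := by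
    intro z; rw [hSdot]; exact dot_nonneg _
  -- P-Cauchy-Schwarz
  have pcs : ∀ w z : Fin d → ℝ,
      w ⬝ᵥ z ≤ Real.sqrt (w ⬝ᵥ (P⁻¹ *ᵥ w)) * Real.sqrt (z ⬝ᵥ (P *ᵥ z)) := by
    intro w z
    set u : Fin d → ℝ := P⁻¹ *ᵥ w with hu
    have h1 : u ⬝ᵥ (P *ᵥ z) = w ⬝ᵥ z := by
      rw [dotProduct_mulVec u, hu, vecMul_mulVec, hPinvsymm,
        Matrix.nonsing_inv_mul P hdet, vecMul_one]
    have h2 : u ⬝ᵥ (P *ᵥ u) = w ⬝ᵥ (P⁻¹ *ᵥ w) := by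
      conv_lhs => rw [hu]
      rw [mulVec_mulVec, Matrix.mul_nonsing_inv P hdet, one_mulVec, dotProduct_comm]
    set a := S *ᵥ u
    set b := S *ᵥ z
    have hab : w ⬝ᵥ z = a ⬝ᵥ b := by rw [← h1, hSdot]
    have haa : a ⬝ᵥ a = w ⬝ᵥ (P⁻¹ *ᵥ w) := by rw [← h2, hSdot]
    have hbb : b ⬝ᵥ b = z ⬝ᵥ (P *ᵥ z) := by rw [hSdot]
    rw [hab, ← haa, ← hbb, ← Real.sqrt_mul (dot_nonneg a)]
    calc a ⬝ᵥ b ≤ |a ⬝ᵥ b| := le_abs_self _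
      _ = Real.sqrt ((a ⬝ᵥ b) ^ 2) := (Real.sqrt_sq_eq_abs _).symm
      _ ≤ Real.sqrt ((a ⬝ᵥ a) * (b ⬝ᵥ b)) := Real.sqrt_le_sqrt (cs a b)
  -- sign vectors
  set z : (Fin v → Bool) → Fin d → ℝ := fun s => ∑ j, sgn17 (s j) • x j with hz
  set Q : (Fin v → Bool) → ℝ := fun s => z s ⬝ᵥ (P *ᵥ z s) with hQ
  set T : ℝ := ∑ j, x j ⬝ᵥ (P *ᵥ x j) with hT
  have hTnn : 0 ≤ T := Finset.sum_nonneg fun j _ => hq_nonneg _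
  -- per-sign bound
  have key : ∀ s : Fin v → Bool, (v : ℝ) ≤ Real.sqrt (2 * E) * Real.sqrt (Q s) := by
    intro s
    obtain ⟨w, hwE, hwm⟩ := hshatter (fun j => sgn17 (s j)) (fun j => sgn17_cases (s j))
    have hdz : w ⬝ᵥ z s = ∑ j, sgn17 (s j) * (w ⬝ᵥ x j) := by
      rw [hz, dot_sum]
      exact Finset.sum_congr rfl fun j _ => by rw [dotProduct_smul]; rfl
    have h1 : (v : ℝ) ≤ w ⬝ᵥ z s := by
      rw [hdz]
      calc (v : ℝ) = ∑ _j : Fin v, (1 : ℝ) := by simp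
        _ ≤ ∑ j, sgn17 (s j) * (w ⬝ᵥ x j) :=
          Finset.sum_le_sum fun j _ => hwm j
    have h2 : w ⬝ᵥ (P⁻¹ *ᵥ w) ≤ 2 * E := by linarith
    have h3 : Real.sqrt (w ⬝ᵥ (P⁻¹ *ᵥ w)) ≤ Real.sqrt (2 * E) := Real.sqrt_le_sqrt h2
    calc (v : ℝ) ≤ w ⬝ᵥ z s := h1
      _ ≤ Real.sqrt (w ⬝ᵥ (P⁻¹ *ᵥ w)) * Real.sqrt (Q s) := pcs w (z s)
      _ ≤ Real.sqrt (2 * E) * Real.sqrt (Q s) :=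
        mul_le_mul_of_nonneg_right h3 (Real.sqrt_nonneg _)
  -- expansion: sum of Q over all sign vectors
  have hQexp : ∀ s, Q s = ∑ j, ∑ k, sgn17 (s j) * sgn17 (s k) * (x j ⬝ᵥ (P *ᵥ x k)) := by
    intro s
    rw [hQ]
    simp only
    rw [hz]
    simp only
    rw [mulVec_sum']
    rw [sum_dot]
    refine Finset.sum_congr rfl fun j _ => ?_
    rw [smul_dotProduct, dot_sum]
    rw [smul_eq_mul, Finset.mul_sum]
    refine Finset.sum_congr rfl fun k _ => ?_
    rw [mulVec_smul, dotProduct_smul]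
    simp [mul_assoc, mul_comm, mul_left_comm]
  have hcard : (Fintype.card (Fin v → Bool) : ℝ) = 2 ^ v := by
    simp [Fintype.card_fun]
  have hsumQ : ∑ s : Fin v → Bool, Q s = 2 ^ v * T := by
    calc ∑ s : Fin v → Bool, Q s
        = ∑ s : Fin v → Bool, ∑ j, ∑ k, sgn17 (s j) * sgn17 (s k) * (x j ⬝ᵥ (P *ᵥ x k)) :=
          Finset.sum_congr rfl fun s _ => hQexp s
      _ = ∑ j, ∑ k, (∑ s : Fin v → Bool, sgn17 (s j) * sgn17 (s k)) * (x j ⬝ᵥ (P *ᵥ x k)) := by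
          rw [Finset.sum_comm]
          refine Finset.sum_congr rfl fun j _ => ?_
          rw [Finset.sum_comm]
          refine Finset.sum_congr rfl fun k _ => ?_
          rw [Finset.sum_mul]
      _ = ∑ j, (2 : ℝ) ^ v * (x j ⬝ᵥ (P *ᵥ x j)) := by
          refine Finset.sum_congr rfl fun j _ => ?_
          rw [Finset.sum_eq_single j]
          · congr 1
            calc ∑ s : Fin v → Bool, sgn17 (s j) * sgn17 (s j)
                = ∑ _s : Fin v → Bool, (1 : ℝ) :=
                  Finset.sum_congr rfl fun s _ => sgn17_sq (s j)
              _ = 2 ^ v := by rw [Finset.sum_const]; simp [hcard, Fintype.card_fun]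
          · intro k _ hkj
            rw [sum_sgn17_mul v j k (Ne.symm hkj), zero_mul]
          · intro h; exact absurd (Finset.mem_univ j) h
      _ = 2 ^ v * T := by rw [hT, Finset.mul_sum]
  -- sum the key inequality
  have hQnn : ∀ s, 0 ≤ Q s := fun s => hq_nonneg _
  have hsum1 : (v : ℝ) * 2 ^ v ≤ Real.sqrt (2 * E) * ∑ s : Fin v → Bool, Real.sqrt (Q s) := by
    calc (v : ℝ) * 2 ^ v = ∑ _s : Fin v → Bool, (v : ℝ) := by
          rw [Finset.sum_const]; simp [Fintype.card_fun, mul_comm]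
      _ ≤ ∑ s : Fin v → Bool, Real.sqrt (2 * E) * Real.sqrt (Q s) :=
          Finset.sum_le_sum fun s _ => key s
      _ = Real.sqrt (2 * E) * ∑ s : Fin v → Bool, Real.sqrt (Q s) := by
          rw [Finset.mul_sum]
  have hsum2 : ∑ s : Fin v → Bool, Real.sqrt (Q s) ≤ Real.sqrt (2 ^ v) * Real.sqrt (2 ^ v * T) := by
    have hcs := Finset.sum_mul_sq_le_sq_mul_sq Finset.univ (fun _ : Fin v → Bool => (1 : ℝ))
      (fun s => Real.sqrt (Q s))
    simp only [one_mul, one_pow, Finset.sum_const, nsmul_eq_mul, mul_one] at hcs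
    have hsq : ∀ s : Fin v → Bool, Real.sqrt (Q s) ^ 2 = Q s := fun s => Real.sq_sqrt (hQnn s)
    rw [Finset.sum_congr rfl (fun s _ => hsq s), hsumQ] at hcs
    have hnn : 0 ≤ ∑ s : Fin v → Bool, Real.sqrt (Q s) :=
      Finset.sum_nonneg fun s _ => Real.sqrt_nonneg _
    have := Real.sqrt_le_sqrt hcs
    rw [Real.sqrt_sq hnn, Real.sqrt_mul (by positivity)] at this
    calc ∑ s : Fin v → Bool, Real.sqrt (Q s)
        ≤ Real.sqrt (Fintype.card (Fin v → Bool)) * Real.sqrt (2 ^ v * T) := this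
      _ = Real.sqrt (2 ^ v) * Real.sqrt (2 ^ v * T) := by rw [hcard]
  have hfinal : (v : ℝ) * 2 ^ v ≤ Real.sqrt (2 * E) * Real.sqrt T * 2 ^ v := by
    have h : Real.sqrt (2 ^ v) * Real.sqrt (2 ^ v * T) = 2 ^ v * Real.sqrt T := by
      rw [Real.sqrt_mul (by positivity), ← mul_assoc, ← Real.sqrt_mul (by positivity),
        ← sq, Real.sqrt_sq (by positivity)]
    calc (v : ℝ) * 2 ^ v ≤ Real.sqrt (2 * E) * ∑ s : Fin v → Bool, Real.sqrt (Q s) := hsum1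
      _ ≤ Real.sqrt (2 * E) * (Real.sqrt (2 ^ v) * Real.sqrt (2 ^ v * T)) :=
          mul_le_mul_of_nonneg_left hsum2 (Real.sqrt_nonneg _)
      _ = Real.sqrt (2 * E) * Real.sqrt T * 2 ^ v := by rw [h]; ring
  have h2v : (0 : ℝ) < 2 ^ v := by positivity
  exact le_of_mul_le_mul_right hfinal h2v
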